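/- Let (P,·,[−,−]) be a finite-dimensional Poisson algebra, r = Σᵢ xᵢ⊗yᵢ ∈ P⊗P, and define Δ_r, δ_r : P → P⊗P by Δ_r(p) = (id⊗𝔲(p) − 𝔲(p)⊗id)(r) and δ_r(p) = (id⊗ad(p) + ad(p)⊗id)(r). Let (B,∘_B,ω) be a finite-dimensional quadratic perm algebra and ν_ω : B → B⊗B the unique linear map with ω̂(ν_ω(b), c⊗d) = −ω(b, c∘_B d) for all c,d ∈ B, where ω̂(x⊗y, c⊗d) = ω(x,c)ω(y,d). Define ν, ϑ : P⊗B → (P⊗B)⊗(P⊗B) by ν(p⊗b) = Σ (p₍₁₎⊗b₁)⊗(p₍₂₎⊗b₂) where Δ_r(p) = Σ p₍₁₎⊗p₍₂₎ and ν_ω(b) = Σ b₁⊗b₂, and ϑ(p⊗b) = Σ (p₍₁₎⊗b₁)⊗(p₍₂₎⊗b₂) where δ_r(p) = Σ p₍₁₎⊗p₍₂₎ and ν_ω(b) = Σ b₁⊗b₂. Let {e_j} be a basis of B with ω-dual basis {f_j}, and r̂ = Σ_{i,j}(xᵢ⊗e_j)⊗(yᵢ⊗f_j). Then ν = ν_{r̂}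 and ϑ = ϑ_{r̂}, where ν_{r̂} and ϑ_{r̂} are the coboundary maps of the induced DPP algebra (P⊗B,∘,∗) associated with r̂; in particular the induced comultiplications are coboundary. -/

import Mathlib

open TensorProduct LinearMap

/-- The axioms of a dual pre-Poisson (DPP) algebra. -/
structure IsDPP {k A : Type*} [Field k] [AddCommGroup A] [Module k A]
    (c s : A →ₗ[k] A →ₗ[k] A) : Prop where
  perm_assoc : ∀ a b d : A, c a (c b d) = c (c a b) d
  perm_comm : ∀ a b d : A, c (c a b) d = c (c b a) d
  leibniz : ∀ a b d : A, s a (s b d) = s (s a b) d + s b (s a d)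
  comp1 : ∀ a b d : A, s (c a b) d = c a (s b d) + c b (s a d)
  comp2 : ∀ a b d : A, c (s a b) d = s a (c b d) - c b (s a d)
  comp3 : ∀ a b d : A, c (s a b) d = - c (s b a) d

section Tensor

variable (k A : Type*) [Field k] [AddCommGroup A] [Module k A]

/-- The flip map on `A ⊗ A`. -/
noncomputable def tauM : A ⊗[k] A →ₗ[k] A ⊗[k] A := (TensorProduct.comm k A A).toLinearMap

variable {A}

/-- `x⊗y ⊗ x'⊗y' ↦ x ⊗ (f(y⊗x') ⊗ y')` for a multiplication `f`. -/
noncomputable def term1 (f : A ⊗[k] A →ₗ[k] A) :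
    (A ⊗[k] A) ⊗[k] (A ⊗[k] A) →ₗ[k] A ⊗[k] (A ⊗[k] A) :=
  (LinearMap.lTensor A ((f.rTensor A) ∘ₗ (TensorProduct.assoc k A A A).symm.toLinearMap)) ∘ₗ
    (TensorProduct.assoc k A A (A ⊗[k] A)).toLinearMap

/-- `x⊗y ⊗ x'⊗y' ↦ x ⊗ (x' ⊗ f(y⊗y'))`. -/
noncomputable def term2 (f : A ⊗[k] A →ₗ[k] A) :
    (A ⊗[k] A) ⊗[k] (A ⊗[k] A) →ₗ[k] A ⊗[k] (A ⊗[k] A) :=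
  (TensorProduct.assoc k A A A).toLinearMap ∘ₗ (LinearMap.lTensor (A ⊗[k] A) f) ∘ₗ
    (tensorTensorTensorComm k A A A A).toLinearMap

/-- `x⊗y ⊗ x'⊗y' ↦ f(x⊗x') ⊗ (y ⊗ y')`. -/
noncomputable def term3 (f : A ⊗[k] A →ₗ[k] A) :
    (A ⊗[k] A) ⊗[k] (A ⊗[k] A) →ₗ[k] A ⊗[k] (A ⊗[k] A) :=
  (f.rTensor (A ⊗[k] A)) ∘ₗ (tensorTensorTensorComm k A A A A).toLinearMap

/-- `x⊗y ⊗ x'⊗y' ↦ f(x⊗x') ⊗ (y' ⊗ y)`. -/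
noncomputable def term4 (f : A ⊗[k] A →ₗ[k] A) :
    (A ⊗[k] A) ⊗[k] (A ⊗[k] A) →ₗ[k] A ⊗[k] (A ⊗[k] A) :=
  (LinearMap.lTensor A (tauM k A)) ∘ₗ term3 k f

/-- `x⊗y ⊗ x'⊗y' ↦ x' ⊗ (f(x⊗y') ⊗ y)`. -/
noncomputable def term5 (f : A ⊗[k] A →ₗ[k] A) :
    (A ⊗[k] A) ⊗[k] (A ⊗[k] A) →ₗ[k] A ⊗[k] (A ⊗[k] A) :=
  (term1 k (f ∘ₗ tauM k A)) ∘ₗ (TensorProduct.comm k (A ⊗[k] A) (A ⊗[k] A)).toLinearMap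

/-- `x⊗y ⊗ x'⊗y' ↦ x' ⊗ (x ⊗ f(y⊗y'))`. -/
noncomputable def term6 (f : A ⊗[k] A →ₗ[k] A) :
    (A ⊗[k] A) ⊗[k] (A ⊗[k] A) →ₗ[k] A ⊗[k] (A ⊗[k] A) :=
  (TensorProduct.assoc k A A A).toLinearMap ∘ₗ (LinearMap.lTensor (A ⊗[k] A) f) ∘ₗ
    ((tauM k A).rTensor (A ⊗[k] A)) ∘ₗ (tensorTensorTensorComm k A A A A).toLinearMap

/-- The perm Yang-Baxter map `r ⊗ r ↦ r₁₂∘r₂₃ − r₁₃∘r₂₃ + r₁₂∘r₁₃ − r₁₃∘r₁₂`. -/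
noncomputable def permYB (c : A →ₗ[k] A →ₗ[k] A) :
    (A ⊗[k] A) ⊗[k] (A ⊗[k] A) →ₗ[k] A ⊗[k] (A ⊗[k] A) :=
  term1 k (TensorProduct.lift c) - term2 k (TensorProduct.lift c) +
    term3 k (TensorProduct.lift c) - term4 k (TensorProduct.lift c)

/-- The Leibniz Yang-Baxter map `r ⊗ r ↦ r₁₂∗r₁₃ + r₁₂∗r₂₃ − r₂₃∗r₁₂ + r₂₃∗r₁₃`. -/
noncomputable def leibYB (s : A →ₗ[k] A →ₗ[k] A) :
    (A ⊗[k] A) ⊗[k] (A ⊗[k] A) →ₗ[k] A ⊗[k] (A ⊗[k] A) :=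
  term3 k (TensorProduct.lift s) + term1 k (TensorProduct.lift s) -
    term5 k (TensorProduct.lift s) + term6 k (TensorProduct.lift s)

/-- `r` is a solution of the dual pre-Poisson Yang-Baxter equation in `(A, c, s)`. -/
noncomputable def IsDPYBESolution (c s : A →ₗ[k] A →ₗ[k] A) (r : A ⊗[k] A) : Prop :=
  permYB k c (r ⊗ₜ[k] r) = 0 ∧ leibYB k s (r ⊗ₜ[k] r) = 0

/-- DP-invariance of an element of `A ⊗ A`:
`((𝔏(a)+𝔖(a))⊗id − id⊗𝔖(a))(σ) = 0` and `(id⊗𝔯(a) + (𝔯(a)−𝔩(a))⊗id)(σ) = 0`. -/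
def DPInvariant (c s : A →ₗ[k] A →ₗ[k] A) (σ : A ⊗[k] A) : Prop :=
  ∀ a : A,
    ((s a + s.flip a).rTensor A - LinearMap.lTensor A (s.flip a)) σ = 0 ∧
    (LinearMap.lTensor A (c.flip a) + (c.flip a - c a).rTensor A) σ = 0

/-- The coboundary perm comultiplication
`ν_r(a) = (id⊗𝔯(a) + (𝔯(a)−𝔩(a))⊗id)(r)`. -/
noncomputable def nuR (c : A →ₗ[k] A →ₗ[k] A) (r : A ⊗[k] A) : A →ₗ[k] A ⊗[k] A :=
  (LinearMap.applyₗ r) ∘ₗ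
    ((LinearMap.lTensorHom A) ∘ₗ c.flip + (LinearMap.rTensorHom A) ∘ₗ (c.flip - c))

/-- The coboundary Leibniz comultiplication
`ϑ_r(a) = ((𝔏(a)+𝔖(a))⊗id − id⊗𝔖(a))(r)`. -/
noncomputable def thetaR (s : A →ₗ[k] A →ₗ[k] A) (r : A ⊗[k] A) : A →ₗ[k] A ⊗[k] A :=
  (LinearMap.applyₗ r) ∘ₗ
    ((LinearMap.rTensorHom A) ∘ₗ (s + s.flip) - (LinearMap.lTensorHom A) ∘ₗ s.flip)

/-- The map `r^♯ : A* → A` characterised by `⟨r^♯(ξ), η⟩ = (ξ⊗η)(r)`. -/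
noncomputable def sharp (r : A ⊗[k] A) : Module.Dual k A →ₗ[k] A :=
  (TensorProduct.lid k A).toLinearMap ∘ₗ
    (LinearMap.applyₗ (M₂ := k ⊗[k] A) r) ∘ₗ (LinearMap.rTensorHom A)

/-- The functional `ξ ⊗ η` on `A ⊗ A`. -/
noncomputable def pairF (ξ η : Module.Dual k A) : A ⊗[k] A →ₗ[k] k :=
  (TensorProduct.lid k k).toLinearMap ∘ₗ TensorProduct.map ξ η

/-- `(τ ⊗ id)` acting on `A ⊗ (A ⊗ A)`. -/
noncomputable def T12 : A ⊗[k] (A ⊗[k] A) →ₗ[k] A ⊗[k] (A ⊗[k] A) :=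
  (TensorProduct.assoc k A A A).toLinearMap ∘ₗ ((tauM k A).rTensor A) ∘ₗ
    (TensorProduct.assoc k A A A).symm.toLinearMap

/-- `(f ⊗ id)` on triple tensors, landing in `A ⊗ (A ⊗ A)`. -/
noncomputable def rT3 (f : A →ₗ[k] A ⊗[k] A) : A ⊗[k] A →ₗ[k] A ⊗[k] (A ⊗[k] A) :=
  (TensorProduct.assoc k A A A).toLinearMap ∘ₗ (f.rTensor A)

/-- The axioms of a dual pre-Poisson bialgebra `(A, ∘, ∗, ν, ϑ)`. -/
structure IsDPPBialgebra (c s : A →ₗ[k] A →ₗ[k] A) (ν θ : A →ₗ[k] A ⊗[k] A) : Prop where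
  alg : IsDPP c s
  co_perm1 : (rT3 k ν) ∘ₗ ν = (LinearMap.lTensor A ν) ∘ₗ ν
  co_perm2 : (LinearMap.lTensor A ν) ∘ₗ ν = (T12 k) ∘ₗ (LinearMap.lTensor A ν) ∘ₗ ν
  co_leib : (rT3 k θ) ∘ₗ θ =
    (LinearMap.lTensor A θ) ∘ₗ θ + (LinearMap.lTensor A (tauM k A)) ∘ₗ (rT3 k θ) ∘ₗ θ
  co_mix1 : (LinearMap.lTensor A ν) ∘ₗ θ =
    (rT3 k θ) ∘ₗ ν + (T12 k) ∘ₗ (LinearMap.lTensor A θ) ∘ₗ ν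
  co_mix2 : (rT3 k ν) ∘ₗ θ =
    (LinearMap.lTensor A θ) ∘ₗ ν + (T12 k) ∘ₗ (LinearMap.lTensor A θ) ∘ₗ ν
  co_mix3 : (rT3 k θ) ∘ₗ ν = - ((T12 k) ∘ₗ (rT3 k θ) ∘ₗ ν)
  perm6 : ∀ a b : A, ((c.flip a).rTensor A) (ν b) = tauM k A (((c.flip b).rTensor A) (ν a))
  perm7 : ∀ a b : A, ν (c a b) =
    ((c a - c.flip a).rTensor A) (ν b) + (LinearMap.lTensor A (c.flip b)) (ν a)
  perm8 : ∀ a b : A, ν (c a b) =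
    (LinearMap.lTensor A (c a)) (ν b) +
      ((c b - c.flip b).rTensor A) (ν a - tauM k A (ν a))
  leib9 : ∀ a b : A,
    tauM k A (((s.flip b).rTensor A) (θ a)) = ((s.flip a).rTensor A) (θ b)
  leib10 : ∀ a b : A, θ (s a b) =
    (LinearMap.lTensor A (s.flip b) - (s b + s.flip b).rTensor A) (θ a + tauM k A (θ a)) +
      (LinearMap.lTensor A (s a) + (s a).rTensor A) (θ b)
  mix11 : ∀ a b : A, ν (s a b) =
    (LinearMap.lTensor A (s a) + (s a).rTensor A) (ν b) +
      ((c b - c.flip b).rTensor A - LinearMap.lTensor A (c.flip b)) (θ a + tauM k A (θ a))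
  mix12 : ∀ a b : A, θ (c a b) =
    (LinearMap.lTensor A (c a)) (θ b) + (LinearMap.lTensor A (c.flip b)) (θ a) -
      ((s a + s.flip a).rTensor A) (ν b) -
      ((s b + s.flip b).rTensor A) (ν a - tauM k A (ν a))
  mix13 : ∀ a b : A,
    (LinearMap.lTensor A (s.flip a)) (tauM k A (ν b)) = - ((c.flip b).rTensor A) (θ a)
  mix14 : ∀ a b : A, ν (s a b) =
    (LinearMap.lTensor A (c a) - (c a).rTensor A) (θ b) +
      (LinearMap.lTensor A (s.flip b) - (s b + s.flip b).rTensor A)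
        (ν a - tauM k A (ν a))
  mix15 : ∀ a b : A, θ (c a b) + tauM k A (θ (c a b)) =
    (LinearMap.lTensor A (c a)) (θ b + tauM k A (θ b)) +
      (LinearMap.lTensor A (c b)) (θ a + tauM k A (θ a)) -
      ((s a).rTensor A) (ν b - tauM k A (ν b)) -
      ((s b).rTensor A) (ν a - tauM k A (ν a))
  mix16 : ∀ a b : A, θ (c a b) =
    ((c a).rTensor A) (θ b) - (LinearMap.lTensor A (s.flip b)) (ν a - tauM k A (ν a)) +
      (LinearMap.lTensor A (s a)) (ν b) +
      ((c b - c.flip b).rTensor A) (θ a + tauM k A (θ a))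
  mix17 : ∀ a b : A, ν (s a b + s b a) =
    (LinearMap.lTensor A (s a + s.flip a)) (ν b) +
      ((s a + s.flip a).rTensor A) (tauM k A (ν b)) +
      (LinearMap.lTensor A (c b - c.flip b)) (θ a) +
      ((c b - c.flip b).rTensor A) (tauM k A (θ a))

end Tensor

section Poisson

variable {k P : Type*} [Field k] [AddCommGroup P] [Module k P]

/-- The axioms of a (not necessarily unital) Poisson algebra. -/
structure IsPoisson (m br : P →ₗ[k] P →ₗ[k] P) : Prop where
  mul_comm : ∀ p q : P, m p q = m q p
  mul_assoc : ∀ p q u : P, m p (m q u) = m (m p q) u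
  br_antisymm : ∀ p q : P, br p q = - br q p
  jacobi : ∀ p q u : P, br p (br q u) + br q (br u p) + br u (br p q) = 0
  leibniz : ∀ p q u : P, br p (m q u) = m (br p q) u + m q (br p u)

variable (k)

/-- `r` is a solution of the Poisson Yang-Baxter equation in `(P, m, br)`. -/
noncomputable def IsPoiYBESolution (m br : P →ₗ[k] P →ₗ[k] P) (r : P ⊗[k] P) : Prop :=
  (term3 k (TensorProduct.lift m) + term2 k (TensorProduct.lift m)
      - term5 k (TensorProduct.lift m)) (r ⊗ₜ[k] r) = 0 ∧
  (term3 k (TensorProduct.lift br) + term2 k (TensorProduct.lift br)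
      + term1 k (TensorProduct.lift br)) (r ⊗ₜ[k] r) = 0

/-- Poi-invariance of an element of `P ⊗ P`:
`(id⊗𝔲(p) − 𝔲(p)⊗id)(σ) = 0` and `(id⊗ad(p) + ad(p)⊗id)(σ) = 0` for all `p`. -/
def PoiInvariant (m br : P →ₗ[k] P →ₗ[k] P) (σ : P ⊗[k] P) : Prop :=
  ∀ p : P,
    (LinearMap.lTensor P (m p) - (m p).rTensor P) σ = 0 ∧
    (LinearMap.lTensor P (br p) + (br p).rTensor P) σ = 0

end Poisson

section Cobound

variable {k P : Type*} [Field k] [AddCommGroup P] [Module k P]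

/-- The coboundary infinitesimal comultiplication
`Δ_r(p) = (id⊗𝔲(p) − 𝔲(p)⊗id)(r)`. -/
noncomputable def DeltaR (m : P →ₗ[k] P →ₗ[k] P) (r : P ⊗[k] P) : P →ₗ[k] P ⊗[k] P :=
  (LinearMap.applyₗ r) ∘ₗ
    ((LinearMap.lTensorHom P) ∘ₗ m - (LinearMap.rTensorHom P) ∘ₗ m)

/-- The coboundary Lie comultiplication `δ_r(p) = (id⊗ad(p) + ad(p)⊗id)(r)`. -/
noncomputable def deltaLR (br : P →ₗ[k] P →ₗ[k] P) (r : P ⊗[k] P) : P →ₗ[k] P ⊗[k] P :=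
  (LinearMap.applyₗ r) ∘ₗ
    ((LinearMap.lTensorHom P) ∘ₗ br + (LinearMap.rTensorHom P) ∘ₗ br)

end Cobound

/-- For a finite-dimensional Poisson algebra `(P, ·, [−,−])`, `r ∈ P⊗P`, and a
finite-dimensional quadratic perm algebra `(B, ∘_B, ω)` with induced completed perm
comultiplication `ν_ω`, the comultiplications `ν = Δ_r • ν_ω` and `ϑ = δ_r • ν_ω` on
`P⊗B` coincide with the coboundary maps `ν_{r̂}`, `ϑ_{r̂}` of the induced DPP algebra
`(P⊗B, ∘, ∗)` associated with `r̂ = Σ_{i,j}(xᵢ⊗eⱼ)⊗(yᵢ⊗fⱼ)`. -/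
theorem stmt17 {k P B : Type*} [Field k] [CharZero k]
    [AddCommGroup P] [Module k P] [FiniteDimensional k P]
    [AddCommGroup B] [Module k B] [FiniteDimensional k B]
    (m br : P →ₗ[k] P →ₗ[k] P) (hP : IsPoisson m br)
    (cB : B →ₗ[k] B →ₗ[k] B)
    (hB : ∀ b c d : B, cB b (cB c d) = cB (cB b c) d ∧ cB (cB b c) d = cB (cB c b) d)
    (ω : B →ₗ[k] B →ₗ[k] k)
    (hnd : ∀ b : B, (∀ c : B, ω b c = 0) → b = 0)
    (hskew : ∀ b c : B, ω b c = - ω c b)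
    (hinv : ∀ b c d : B, ω (cB b c) d = ω b (cB c d - cB d c))
    (νω : B →ₗ[k] B ⊗[k] B)
    (hνω : ∀ b c d : B, pairF k (ω.flip c) (ω.flip d) (νω b) = - ω b (cB c d))
    {ι : Type*} [Fintype ι] [DecidableEq ι]
    (e : Module.Basis ι k B) (f : ι → B)
    (hf : ∀ i j : ι, ω (f i) (e j) = if i = j then 1 else 0)
    (circ star : P ⊗[k] B →ₗ[k] P ⊗[k] B →ₗ[k] P ⊗[k] B)
    (hcirc : ∀ (p q : P) (b c : B),
      circ (p ⊗ₜ[k] b) (q ⊗ₜ[k] c) = (m p q) ⊗ₜ[k] (cB b c))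
    (hstar : ∀ (p q : P) (b c : B),
      star (p ⊗ₜ[k] b) (q ⊗ₜ[k] c) = (br p q) ⊗ₜ[k] (cB b c))
    (r : P ⊗[k] P)
    (rhat : (P ⊗[k] B) ⊗[k] (P ⊗[k] B))
    (hrhat : rhat = (∑ j : ι, TensorProduct.map
      ((TensorProduct.mk k P B).flip (e j)) ((TensorProduct.mk k P B).flip (f j))) r) :
    (tensorTensorTensorComm k P P B B).toLinearMap ∘ₗ
        TensorProduct.map (DeltaR m r) νω = nuR k circ rhat ∧
    (tensorTensorTensorComm k P P B B).toLinearMap ∘ₗ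
        TensorProduct.map (deltaLR br r) νω = thetaR k star rhat := by
  classical
  have hpair : ∀ (ξ η : Module.Dual k B) (x y : B),
      pairF k ξ η (x ⊗ₜ[k] y) = ξ x * η y := by
    intro ξ η x y
    simp [pairF, smul_eq_mul]
  -- key injectivity lemma via the basis `e ⊗ e`
  have key1 : ∀ x : B ⊗[k] B,
      (∀ i j : ι, pairF k (ω.flip (f i)) (ω.flip (f j)) x = 0) → x = 0 := by
    intro x hx
    have hco : ∀ i j : ι, pairF k (ω.flip (f i)) (ω.flip (f j)) =
        (Finsupp.lapply (i, j)) ∘ₗ ((Module.Basis.tensorProduct e e).repr :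
          B ⊗[k] B ≃ₗ[k] _).toLinearMap := by
      intro i j
      apply (Module.Basis.tensorProduct e e).ext
      rintro ⟨a, c⟩
      simp only [Module.Basis.tensorProduct_apply, LinearMap.comp_apply, hpair,
        LinearEquiv.coe_coe, Module.Basis.repr_self, Finsupp.lapply_apply,
        Finsupp.single_apply, LinearMap.flip_apply]
      rw [hskew (e a) (f i), hskew (e c) (f j), hf, hf]
      by_cases h1 : i = a <;> by_cases h2 : j = c <;>
        simp [h1, h2, Prod.ext_iff, eq_comm]
    have hz : (Module.Basis.tensorProduct e e).repr x = 0 := by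
      ext q
      obtain ⟨i, j⟩ := q
      have := hx i j
      rw [hco i j] at this
      simpa using this
    exact ((Module.Basis.tensorProduct e e).repr.map_eq_zero_iff).mp hz
  have key2 : ∀ x : B ⊗[k] B,
      (∀ c d : B, pairF k (ω.flip c) (ω.flip d) x = 0) → x = 0 :=
    fun x hx => key1 x (fun i j => hx (f i) (f j))
  -- coordinates w.r.t. `e` via `ω (f j) ·`
  have hcoord : ∀ (x : B) (j : ι), ω (f j) x = e.repr x j := by
    intro x j
    conv_lhs => rw [← e.sum_repr x]
    rw [map_sum]
    simp [hf, Finset.sum_ite_eq, smul_eq_mul]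
  have hrepr : ∀ x : B, (∑ j, ω (f j) x • e j) = x := by
    intro x
    simp only [hcoord]
    exact e.sum_repr x
  have hsum : ∀ (d : B) (L : B →ₗ[k] k), (∑ j, L (e j) * ω (f j) d) = L d := by
    intro d L
    conv_rhs => rw [← hrepr d]
    rw [map_sum]
    simp [smul_eq_mul, mul_comm]
  -- first expression for νω
  have hν1 : ∀ b : B, νω b = ∑ j, (e j) ⊗ₜ[k] (cB (f j) b) := by
    intro b
    rw [← sub_eq_zero]
    apply key1
    intro i j
    rw [map_sub, hνω, map_sum]
    simp only [hpair, LinearMap.flip_apply]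
    have hcol : ∀ j' : ι, ω (e j') (f i) * ω (cB (f j') b) (f j)
        = (if i = j' then (- ω (cB (f j') b) (f j)) else 0) := by
      intro j'
      rw [hskew (e j') (f i), hf]
      split <;> simp
    rw [Finset.sum_congr rfl (fun j' _ => hcol j'), Finset.sum_ite_eq]
    simp only [Finset.mem_univ, if_true]
    have ha := hinv (f i) b (f j)
    have hb2 := hinv (f i) (f j) b
    have hc2 := hskew b (cB (f i) (f j))
    simp only [map_sub] at ha hb2
    linear_combination -hc2 + hb2 + ha
  -- second expression for νω
  have hν2 : ∀ b : B, νω b = ∑ j, (cB b (e j) - cB (e j) b) ⊗ₜ[k] (f j) := by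
    intro b
    rw [← sub_eq_zero]
    apply key2
    intro c d
    rw [map_sub, hνω, map_sum]
    simp only [TensorProduct.sub_tmul, map_sub, hpair, LinearMap.flip_apply]
    rw [Finset.sum_sub_distrib]
    have h1 : (∑ j, ω (cB b (e j)) c * ω (f j) d) = ω (cB b d) c := by
      simpa using hsum d ((ω.flip c) ∘ₗ (cB b))
    have h2 : (∑ j, ω (cB (e j) b) c * ω (f j) d) = ω (cB d b) c := by
      simpa using hsum d ((ω.flip c) ∘ₗ (cB.flip b))
    rw [h1, h2]
    have ha := hinv b d c
    have hb2 := hinv d b c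
    have hc2 := hinv d c b
    have hd2 := hskew b (cB d c)
    simp only [map_sub] at ha hb2 hc2
    linear_combination -ha + hb2 + hc2 - hd2
  -- two expansions of ttc applied to pure ⊗ νω b
  have hA : ∀ (x q : P) (b : B),
      (tensorTensorTensorComm k P P B B) ((x ⊗ₜ[k] q) ⊗ₜ[k] νω b)
        = ∑ j, (x ⊗ₜ[k] e j) ⊗ₜ[k] (q ⊗ₜ[k] cB (f j) b) := by
    intro x q b
    rw [hν1 b, TensorProduct.tmul_sum, map_sum]
    simp [TensorProduct.tensorTensorTensorComm_tmul]
  have hBB : ∀ (x q : P) (b : B),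
      (tensorTensorTensorComm k P P B B) ((x ⊗ₜ[k] q) ⊗ₜ[k] νω b)
        = ∑ j, (x ⊗ₜ[k] (cB b (e j) - cB (e j) b)) ⊗ₜ[k] (q ⊗ₜ[k] f j) := by
    intro x q b
    rw [hν2 b, TensorProduct.tmul_sum, map_sum]
    simp [TensorProduct.tensorTensorTensorComm_tmul]
  have hDelta : ∀ p : P, DeltaR m r p
      = (LinearMap.lTensor P (m p) - LinearMap.rTensor P (m p)) r := fun _ => rfl
  have hdelta : ∀ p : P, deltaLR br r p
      = (LinearMap.lTensor P (br p) + LinearMap.rTensor P (br p)) r := fun _ => rfl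
  have hnu : ∀ (ρ : (P ⊗[k] B) ⊗[k] (P ⊗[k] B)) (a : P ⊗[k] B), nuR k circ ρ a
      = (LinearMap.lTensor (P ⊗[k] B) (circ.flip a)
          + LinearMap.rTensor (P ⊗[k] B) (circ.flip a - circ a)) ρ := fun _ _ => rfl
  have htheta : ∀ (ρ : (P ⊗[k] B) ⊗[k] (P ⊗[k] B)) (a : P ⊗[k] B), thetaR k star ρ a
      = (LinearMap.rTensor (P ⊗[k] B) (star a + star.flip a)
          - LinearMap.lTensor (P ⊗[k] B) (star.flip a)) ρ := fun _ _ => rfl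
  subst hrhat
  constructor
  · apply TensorProduct.ext'
    intro p b
    rw [LinearMap.comp_apply, TensorProduct.map_tmul, hDelta, hnu]
    simp only [LinearEquiv.coe_coe]
    clear hDelta hdelta
    induction r using TensorProduct.induction_on with
    | zero => simp
    | tmul x y =>
      rw [LinearMap.sub_apply, LinearMap.lTensor_tmul, LinearMap.rTensor_tmul,
        TensorProduct.sub_tmul, map_sub, hA, hBB]
      simp only [LinearMap.sum_apply, TensorProduct.map_tmul,
        TensorProduct.mk_apply, LinearMap.flip_apply, map_sum,
        LinearMap.lTensor_tmul, LinearMap.rTensor_tmul, LinearMap.sub_apply,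
        LinearMap.add_apply, hcirc]
      simp only [hP.mul_comm y p, hP.mul_comm x p, TensorProduct.tmul_sub,
        TensorProduct.sub_tmul, Finset.sum_add_distrib, Finset.sum_sub_distrib]
      abel
    | add r1 r2 h1 h2 =>
      simp only [map_add, TensorProduct.add_tmul] at h1 h2 ⊢
      rw [h1, h2]
  · apply TensorProduct.ext'
    intro p b
    rw [LinearMap.comp_apply, TensorProduct.map_tmul, hdelta, htheta]
    simp only [LinearEquiv.coe_coe]
    clear hDelta hdelta
    induction r using TensorProduct.induction_on with
    | zero => simp
    | tmul x y =>
      rw [LinearMap.add_apply, LinearMap.lTensor_tmul, LinearMap.rTensor_tmul,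
        TensorProduct.add_tmul, map_add, hA, hBB]
      simp only [LinearMap.sum_apply, TensorProduct.map_tmul,
        TensorProduct.mk_apply, LinearMap.flip_apply, map_sum,
        LinearMap.lTensor_tmul, LinearMap.rTensor_tmul, LinearMap.sub_apply,
        LinearMap.add_apply, hstar]
      simp only [hP.br_antisymm y p, hP.br_antisymm x p, TensorProduct.tmul_sub,
        TensorProduct.sub_tmul, TensorProduct.add_tmul, TensorProduct.neg_tmul,
        TensorProduct.tmul_neg, Finset.sum_add_distrib, Finset.sum_sub_distrib,
        Finset.sum_neg_distrib]
      abel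
    | add r1 r2 h1 h2 =>
      simp only [map_add, TensorProduct.add_tmul] at h1 h2 ⊢
      rw [h1, h2]
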